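/- Let H be a connected Hamiltonian subcubic graph with Hamiltonian cycle v1…v_{2p+1} of odd length, and suppose there is a chord v_i v_j with |i−j| > 1 and deg(v_{i−1}) = deg(v_{j−1}) = 2. Then χ'(H) = 3. -/

import Mathlib

open SimpleGraph

/-- parity color -/
def pc (t : ℕ) : Fin 3 := if Even t then 0 else 1

/-- color of the cycle edge `e_k = {v k, v (k+1)}` -/
def fcol (n : ℕ) (i j k : ZMod n) : Fin 3 :=
  if k = i - 1 ∨ k = j - 1 then 2
  else if (k - i).val < (j - i).val then pc (k - i).val
  else pc (k - j).val

/-- edge color on index pairs -/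
def ecol (n : ℕ) (i j a b : ZMod n) : Fin 3 :=
  if b = a + 1 then fcol n i j a
  else if a = b + 1 then fcol n i j b
  else if (a = i ∧ b = j) ∨ (a = j ∧ b = i) then 1
  else 2

lemma pc_ne_two (t : ℕ) : pc t ≠ 2 := by unfold pc; split <;> decide

lemma pc_succ (t : ℕ) : pc t ≠ pc (t + 1) := by
  have := Nat.even_add_one (n := t)
  unfold pc; split <;> split <;> simp_all

section
variable {p : ℕ} {i j : ZMod (2*p+1)}

lemma fcol_ne_two (k : ZMod (2*p+1)) (hk1 : k ≠ i - 1) (hk2 : k ≠ j - 1) :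
    fcol (2*p+1) i j k ≠ 2 := by
  unfold fcol; rw [if_neg (not_or.2 ⟨hk1, hk2⟩)]; split <;> apply pc_ne_two

lemma fcol_i1 : fcol (2*p+1) i j (i - 1) = 2 := by
  unfold fcol; rw [if_pos (Or.inl rfl)]

lemma fcol_j1 : fcol (2*p+1) i j (j - 1) = 2 := by
  unfold fcol; rw [if_pos (Or.inr rfl)]

variable (hp : 1 ≤ p) (hne : i ≠ j) (hne1 : j ≠ i + 1) (hne2 : i ≠ j + 1)
include hp hne hne1 hne2

lemma a_facts : 2 ≤ (j - i).val ∧ (j - i).val ≤ 2*p - 1 := by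
  have hlt : (j - i).val < 2*p+1 := ZMod.val_lt _
  have hcast : (((j - i).val : ℕ) : ZMod (2*p+1)) = j - i := ZMod.natCast_zmod_val _
  have h0 : (j - i).val ≠ 0 := by
    intro h
    have := (ZMod.val_eq_zero (j-i)).1 h
    rw [sub_eq_zero] at this
    exact hne this.symm
  have h1 : (j - i).val ≠ 1 := by
    intro h; rw [h] at hcast; push_cast at hcast
    exact hne1 (by linear_combination -hcast)
  have hn1 : (j - i).val ≠ 2*p := by
    intro h
    have hm1 : ((2*p : ℕ) : ZMod (2*p+1)) = -1 := by
      have : ((2*p+1 : ℕ) : ZMod (2*p+1)) = 0 := ZMod.natCast_self _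
      push_cast at this ⊢; linear_combination this
    rw [h, hm1] at hcast
    exact hne2 (by linear_combination hcast)
  omega

lemma fcol_i : fcol (2*p+1) i j i = 0 := by
  haveI : Fact (1 < 2*p+1) := ⟨by omega⟩
  obtain ⟨ha2, _⟩ := a_facts hp hne hne1 hne2
  have c1 : i ≠ i - 1 := by
    intro h; exact one_ne_zero (α := ZMod (2*p+1)) (by linear_combination h)
  have c2 : i ≠ j - 1 := by
    intro h; exact hne1 (by linear_combination -h)
  unfold fcol
  rw [if_neg (not_or.2 ⟨c1, c2⟩), if_pos (by rw [sub_self, ZMod.val_zero]; omega)]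
  simp [ZMod.val_zero, pc]

lemma fcol_j : fcol (2*p+1) i j j = 0 := by
  haveI : Fact (1 < 2*p+1) := ⟨by omega⟩
  have c1 : j ≠ i - 1 := by
    intro h; exact hne2 (by linear_combination -h)
  have c2 : j ≠ j - 1 := by
    intro h; exact one_ne_zero (α := ZMod (2*p+1)) (by linear_combination h)
  unfold fcol
  rw [if_neg (not_or.2 ⟨c1, c2⟩), if_neg (lt_irrefl _)]
  simp [ZMod.val_zero, pc]

lemma fcol_step (k : ZMod (2*p+1)) :
    fcol (2*p+1) i j k ≠ fcol (2*p+1) i j (k+1) := by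
  haveI : Fact (1 < 2*p+1) := ⟨by omega⟩
  obtain ⟨ha2, haN⟩ := a_facts hp hne hne1 hne2
  have hm1 : ((2*p : ℕ) : ZMod (2*p+1)) = -1 := by
    have : ((2*p+1 : ℕ) : ZMod (2*p+1)) = 0 := ZMod.natCast_self _
    push_cast at this ⊢; linear_combination this
  have E1 : ∀ m : ZMod (2*p+1), m = i - 1 ↔ (m - i).val = 2*p := by
    intro m
    constructor
    · intro h
      have hmi : m - i = -1 := by rw [h]; ring
      rw [hmi, ← hm1, ZMod.val_natCast_of_lt (by omega)]
    · intro h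
      have := ZMod.natCast_zmod_val (m - i)
      rw [h, hm1] at this
      linear_combination -this
  have E2 : ∀ m : ZMod (2*p+1), m = j - 1 ↔ (m - i).val = (j - i).val - 1 := by
    intro m
    have hsub : ((((j-i).val - 1 : ℕ)) : ZMod (2*p+1)) = (j - i) - 1 := by
      push_cast [Nat.cast_sub (by omega : 1 ≤ (j-i).val)]
      rw [ZMod.natCast_zmod_val]
    constructor
    · intro h
      have hmi : m - i = (((j-i).val - 1 : ℕ) : ZMod (2*p+1)) := by
        rw [hsub, h]; ring
      rw [hmi, ZMod.val_natCast_of_lt (by have := ZMod.val_lt (j - i); omega)]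
    · intro h
      have := ZMod.natCast_zmod_val (m - i)
      rw [h, hsub] at this
      linear_combination -this
  have E3 : ∀ m : ZMod (2*p+1), (j - i).val ≤ (m - i).val →
      (m - j).val = (m - i).val - (j - i).val := by
    intro m hle
    have hmj : m - j = ((((m-i).val - (j-i).val : ℕ)) : ZMod (2*p+1)) := by
      push_cast [Nat.cast_sub hle]
      rw [ZMod.natCast_zmod_val, ZMod.natCast_zmod_val]; ring
    rw [hmj, ZMod.val_natCast_of_lt (by have := ZMod.val_lt (m - i); omega)]
  have htlt : (k - i).val < 2*p+1 := ZMod.val_lt _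
  by_cases h1 : (k - i).val = 2*p
  · have hk : k = i - 1 := (E1 k).2 h1
    have hk1 : k + 1 = i := by rw [hk]; ring
    rw [hk1, fcol_i hp hne hne1 hne2]
    have : fcol (2*p+1) i j k = 2 := by unfold fcol; rw [if_pos (Or.inl hk)]
    rw [this]; decide
  · have E4 : (k + 1 - i).val = (k - i).val + 1 := by
      have : k + 1 - i = (((k-i).val + 1 : ℕ) : ZMod (2*p+1)) := by
        push_cast; rw [ZMod.natCast_zmod_val]; ring
      rw [this, ZMod.val_natCast_of_lt (by omega)]
    by_cases h2 : (k - i).val = (j - i).val - 1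
    · have hk : k = j - 1 := (E2 k).2 h2
      have hk1 : k + 1 = j := by rw [hk]; ring
      rw [hk1, fcol_j hp hne hne1 hne2]
      have : fcol (2*p+1) i j k = 2 := by unfold fcol; rw [if_pos (Or.inr hk)]
      rw [this]; decide
    · have hk_ne1 : k ≠ i - 1 := fun h => h1 ((E1 k).1 h)
      have hk_ne2 : k ≠ j - 1 := fun h => h2 ((E2 k).1 h)
      by_cases h3 : (k + 1 - i).val = 2*p
      · have hk1 : k + 1 = i - 1 := (E1 _).2 h3
        rw [hk1]
        have : fcol (2*p+1) i j (i-1) = 2 := by unfold fcol; rw [if_pos (Or.inl rfl)]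
        rw [this]; exact fcol_ne_two k hk_ne1 hk_ne2
      · by_cases h4 : (k + 1 - i).val = (j - i).val - 1
        · have hk1 : k + 1 = j - 1 := (E2 _).2 h4
          rw [hk1]
          have : fcol (2*p+1) i j (j-1) = 2 := by unfold fcol; rw [if_pos (Or.inr rfl)]
          rw [this]; exact fcol_ne_two k hk_ne1 hk_ne2
        · have hksucc_ne1 : k + 1 ≠ i - 1 := fun h => h3 ((E1 _).1 h)
          have hksucc_ne2 : k + 1 ≠ j - 1 := fun h => h4 ((E2 _).1 h)
          unfold fcol
          rw [if_neg (not_or.2 ⟨hk_ne1, hk_ne2⟩), if_neg (not_or.2 ⟨hksucc_ne1, hksucc_ne2⟩)]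
          by_cases h5 : (k - i).val < (j - i).val
          · rw [if_pos h5, if_pos (by rw [E4]; omega)]
            rw [E4]; exact pc_succ _
          · rw [if_neg h5, if_neg (by rw [E4]; omega)]
            rw [E3 k (le_of_not_gt h5), E3 (k+1) (by rw [E4]; omega), E4]
            rw [show (k-i).val + 1 - (j-i).val = ((k-i).val - (j-i).val) + 1 by omega]
            exact pc_succ _
end

lemma three_le_degree {V : Type*} [Fintype V] [DecidableEq V] {H : SimpleGraph V}
    [DecidableRel H.Adj] {x a b c : V} (h1 : H.Adj x a) (h2 : H.Adj x b) (h3 : H.Adj x c)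
    (hab : a ≠ b) (hac : a ≠ c) (hbc : b ≠ c) : 3 ≤ H.degree x := by
  have hsub : ({a, b, c} : Finset V) ⊆ H.neighborFinset x := by
    intro y hy
    simp only [Finset.mem_insert, Finset.mem_singleton] at hy
    rw [mem_neighborFinset]
    rcases hy with rfl | rfl | rfl <;> assumption
  calc 3 = ({a, b, c} : Finset V).card := by
        rw [Finset.card_insert_of_notMem (by simp [hab, hac]),
          Finset.card_insert_of_notMem (by simp [hbc]), Finset.card_singleton]
    _ ≤ _ := Finset.card_le_card hsub

lemma four_le_degree {V : Type*} [Fintype V] [DecidableEq V] {H : SimpleGraph V}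
    [DecidableRel H.Adj] {x a b c d : V} (h1 : H.Adj x a) (h2 : H.Adj x b) (h3 : H.Adj x c)
    (h4 : H.Adj x d) (hab : a ≠ b) (hac : a ≠ c) (had : a ≠ d) (hbc : b ≠ c) (hbd : b ≠ d)
    (hcd : c ≠ d) : 4 ≤ H.degree x := by
  have hsub : ({a, b, c, d} : Finset V) ⊆ H.neighborFinset x := by
    intro y hy
    simp only [Finset.mem_insert, Finset.mem_singleton] at hy
    rw [mem_neighborFinset]
    rcases hy with rfl | rfl | rfl | rfl <;> assumption
  calc 4 = ({a, b, c, d} : Finset V).card := by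
        rw [Finset.card_insert_of_notMem (by simp [hab, hac, had]),
          Finset.card_insert_of_notMem (by simp [hbc, hbd]),
          Finset.card_insert_of_notMem (by simp [hcd]), Finset.card_singleton]
    _ ≤ _ := Finset.card_le_card hsub

lemma ecol_symm (n : ℕ) (i j : ZMod n) (h2 : (2 : ZMod n) ≠ 0) (a b : ZMod n) :
    ecol n i j a b = ecol n i j b a := by
  have key : ∀ x : ZMod n, x ≠ x + 1 + 1 := by
    intro x h; exact h2 (by linear_combination -h)
  unfold ecol
  by_cases hb : b = a + 1 <;> by_cases ha : a = b + 1
  · exact absurd (ha.trans (by rw [hb])) (key a)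
  · subst hb
    rw [if_pos rfl, if_neg (key a), if_pos rfl]
  · subst ha
    rw [if_neg (key b), if_pos rfl, if_pos rfl]
  · rw [if_neg hb, if_neg ha, if_neg hb, if_neg ha]
    by_cases hc : (a = i ∧ b = j) ∨ (a = j ∧ b = i)
    · rw [if_pos hc, if_pos (by tauto)]
    · rw [if_neg hc, if_neg (by tauto)]

/-- The chromatic index of `H`, i.e. the chromatic number of its line graph. -/
noncomputable def SimpleGraph.chromaticIndex {V : Type*} (H : SimpleGraph V) : ℕ∞ :=
  H.lineGraph.chromaticNumber

/-- Lemma 1, cases 1 and 2: a connected Hamiltonian subcubic graph on an odd number of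
vertices with a chord `v_i v_j` such that `v_{i-1}` and `v_{j-1}` have degree 2 has
chromatic index 3. -/
theorem stmt12 {V : Type*} [Fintype V] [DecidableEq V] (H : SimpleGraph V)
    [DecidableRel H.Adj] (p : ℕ) (hp : 1 ≤ p)
    (hconn : H.Connected) (hmax : ∀ w, H.degree w ≤ 3)
    (v : ZMod (2 * p + 1) → V) (hbij : Function.Bijective v)
    (hcyc : ∀ i, H.Adj (v i) (v (i + 1)))
    (i j : ZMod (2 * p + 1)) (hchord : H.Adj (v i) (v j))
    (hne : i ≠ j) (hne1 : j ≠ i + 1) (hne2 : i ≠ j + 1)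
    (h1 : H.degree (v (i - 1)) = 2) (h2 : H.degree (v (j - 1)) = 2) :
    H.chromaticIndex = 3 := by
  haveI : Fact (1 < 2*p+1) := ⟨by omega⟩
  have hinj := hbij.1
  have h2z : (2 : ZMod (2*p+1)) ≠ 0 := by
    intro h
    have : ((2:ℕ) : ZMod (2*p+1)) = 0 := by push_cast; exact h
    rw [ZMod.natCast_eq_zero_iff] at this
    have := Nat.le_of_dvd (by norm_num) this
    omega
  -- cycle adjacencies
  have hcycm : ∀ m : ZMod (2*p+1), H.Adj (v m) (v (m-1)) := by
    intro m
    have := hcyc (m-1)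
    rw [sub_add_cancel] at this
    exact this.symm
  -- degree-based neighbor classification
  have Ldeg2 : ∀ m b : ZMod (2*p+1), H.degree (v m) = 2 → H.Adj (v m) (v b) →
      b = m + 1 ∨ b = m - 1 := by
    intro m b hdeg hadj
    by_contra hcon
    push_neg at hcon
    have hd3 : 3 ≤ H.degree (v m) := by
      refine three_le_degree (hcycm m) (hcyc m) hadj ?_ ?_ ?_
      · intro h
        exact h2z (by linear_combination -(hinj h))
      · intro h
        exact hcon.2 (hinj h).symm
      · intro h
        exact hcon.1 (hinj h).symm
    omega
  have Ldeg3 : ∀ m a b : ZMod (2*p+1), H.Adj (v m) (v a) → H.Adj (v m) (v b) →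
      a ≠ m + 1 → a ≠ m - 1 → b ≠ m + 1 → b ≠ m - 1 → a = b := by
    intro m a b ha hb ha1 ha2 hb1 hb2
    by_contra hab
    have hd4 : 4 ≤ H.degree (v m) := by
      refine four_le_degree (hcycm m) (hcyc m) ha hb ?_ ?_ ?_ ?_ ?_ ?_
      · intro h; exact h2z (by linear_combination -(hinj h))
      · intro h; exact ha2 (hinj h).symm
      · intro h; exact hb2 (hinj h).symm
      · intro h; exact ha1 (hinj h).symm
      · intro h; exact hb1 (hinj h).symm
      · intro h; exact hab (hinj h)
    have := hmax (v m)
    omega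
  -- the key pointwise statement
  have OtherA : ∀ m b : ZMod (2*p+1), H.Adj (v m) (v b) → b ≠ m + 1 → ¬(m = b + 1) →
      m ≠ i - 1 ∧ m ≠ j - 1 := by
    intro m b hb cb1 cb2
    constructor
    · intro hm
      rcases Ldeg2 m b (by rw [hm]; exact h1) hb with h | h
      · exact cb1 h
      · exact cb2 (by linear_combination -h)
    · intro hm
      rcases Ldeg2 m b (by rw [hm]; exact h2) hb with h | h
      · exact cb1 h
      · exact cb2 (by linear_combination -h)
  have OtherB : ∀ m b : ZMod (2*p+1), H.Adj (v m) (v b) → b ≠ m + 1 → ¬(m = b + 1) →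
      ¬((m = i ∧ b = j) ∨ (m = j ∧ b = i)) → m ≠ i ∧ m ≠ j := by
    intro m b hb cb1 cb2 cb3
    constructor
    · intro hm
      refine cb3 (Or.inl ⟨hm, ?_⟩)
      refine Ldeg3 m b j hb (by rw [hm]; exact hchord) cb1 ?_ ?_ ?_
      · intro h; exact cb2 (by linear_combination -h)
      · rw [hm]; exact hne1
      · intro h; rw [hm] at h; exact hne2 (by linear_combination -h)
    · intro hm
      refine cb3 (Or.inr ⟨hm, ?_⟩)
      refine Ldeg3 m b i hb (by rw [hm]; exact hchord.symm) cb1 ?_ ?_ ?_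
      · intro h; exact cb2 (by linear_combination -h)
      · rw [hm]; exact hne2
      · intro h; rw [hm] at h; exact hne1 (by linear_combination -h)
  -- the key pointwise statement
  have key : ∀ m a b : ZMod (2*p+1), H.Adj (v m) (v a) → H.Adj (v m) (v b) → a ≠ b →
      ecol (2*p+1) i j m a ≠ ecol (2*p+1) i j m b := by
    intro m a b ha hb hab
    unfold ecol
    by_cases ca1 : a = m + 1
    · rw [if_pos ca1]
      by_cases cb1 : b = m + 1
      · exact absurd (ca1.trans cb1.symm) hab
      rw [if_neg cb1]
      by_cases cb2 : m = b + 1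
      · rw [if_pos cb2]
        have hb' : b = m - 1 := by linear_combination -cb2
        rw [hb']
        have hstep := fcol_step hp hne hne1 hne2 (m - 1)
        rw [sub_add_cancel] at hstep
        exact hstep.symm
      · by_cases cb3 : (m = i ∧ b = j) ∨ (m = j ∧ b = i)
        · rw [if_neg cb2, if_pos cb3]
          rcases cb3 with ⟨hm, _⟩ | ⟨hm, _⟩ <;> rw [hm]
          · rw [fcol_i hp hne hne1 hne2]; decide
          · rw [fcol_j hp hne hne1 hne2]; decide
        · rw [if_neg cb2, if_neg cb3]
          obtain ⟨hm1, hm2⟩ := OtherA m b hb cb1 cb2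
          exact fcol_ne_two m hm1 hm2
    · rw [if_neg ca1]
      by_cases ca2 : m = a + 1
      · rw [if_pos ca2]
        have ha' : a = m - 1 := by linear_combination -ca2
        by_cases cb1 : b = m + 1
        · rw [if_pos cb1, ha']
          have hstep := fcol_step hp hne hne1 hne2 (m - 1)
          rw [sub_add_cancel] at hstep
          exact hstep
        · rw [if_neg cb1]
          by_cases cb2 : m = b + 1
          · exact absurd (by linear_combination cb2 - ca2 : a = b) hab
          · by_cases cb3 : (m = i ∧ b = j) ∨ (m = j ∧ b = i)
            · rw [if_neg cb2, if_pos cb3]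
              rcases cb3 with ⟨hm, _⟩ | ⟨hm, _⟩
              · have hai : a = i - 1 := by rw [hm] at ca2; linear_combination -ca2
                rw [hai, fcol_i1]; decide
              · have haj : a = j - 1 := by rw [hm] at ca2; linear_combination -ca2
                rw [haj, fcol_j1]; decide
            · rw [if_neg cb2, if_neg cb3]
              obtain ⟨hmi, hmj⟩ := OtherB m b hb cb1 cb2 cb3
              apply fcol_ne_two
              · intro h; rw [ha'] at h; exact hmi (by linear_combination h)
              · intro h; rw [ha'] at h; exact hmj (by linear_combination h)
      · rw [if_neg ca2]
        by_cases ca3 : (m = i ∧ a = j) ∨ (m = j ∧ a = i)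
        · rw [if_pos ca3]
          by_cases cb1 : b = m + 1
          · rw [if_pos cb1]
            rcases ca3 with ⟨hm, _⟩ | ⟨hm, _⟩ <;> rw [hm]
            · rw [fcol_i hp hne hne1 hne2]; decide
            · rw [fcol_j hp hne hne1 hne2]; decide
          · rw [if_neg cb1]
            by_cases cb2 : m = b + 1
            · rw [if_pos cb2]
              rcases ca3 with ⟨hm, _⟩ | ⟨hm, _⟩
              · have hbi : b = i - 1 := by rw [hm] at cb2; linear_combination -cb2
                rw [hbi, fcol_i1]; decide
              · have hbj : b = j - 1 := by rw [hm] at cb2; linear_combination -cb2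
                rw [hbj, fcol_j1]; decide
            · by_cases cb3 : (m = i ∧ b = j) ∨ (m = j ∧ b = i)
              · exfalso
                apply hab
                rcases ca3 with ⟨hmi, haj⟩ | ⟨hmj, hai⟩ <;>
                  rcases cb3 with ⟨hmi', hbj⟩ | ⟨hmj', hbi⟩
                · rw [haj, hbj]
                · exact absurd (hmi.symm.trans hmj') hne
                · exact absurd (hmj.symm.trans hmi') (Ne.symm hne)
                · rw [hai, hbi]
              · rw [if_neg cb2, if_neg cb3]; decide
        · rw [if_neg ca3]
          by_cases cb1 : b = m + 1
          · rw [if_pos cb1]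
            obtain ⟨hm1, hm2⟩ := OtherA m a ha ca1 ca2
            exact (fcol_ne_two m hm1 hm2).symm
          · rw [if_neg cb1]
            by_cases cb2 : m = b + 1
            · rw [if_pos cb2]
              obtain ⟨hmi, hmj⟩ := OtherB m a ha ca1 ca2 ca3
              have hb' : b = m - 1 := by linear_combination -cb2
              symm
              apply fcol_ne_two
              · intro h; rw [hb'] at h; exact hmi (by linear_combination h)
              · intro h; rw [hb'] at h; exact hmj (by linear_combination h)
            · by_cases cb3 : (m = i ∧ b = j) ∨ (m = j ∧ b = i)
              · rw [if_neg cb2, if_pos cb3]; decide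
              · rw [if_neg cb2, if_neg cb3]
                exfalso
                apply hab
                refine Ldeg3 m a b ha hb ca1 ?_ cb1 ?_
                · intro h; exact ca2 (by linear_combination -h)
                · intro h; exact cb2 (by linear_combination -h)
  -- build the coloring of the line graph
  let g : V → ZMod (2*p+1) := fun x => (Equiv.ofBijective v hbij).symm x
  have hgv : ∀ k, g (v k) = k := fun k => (Equiv.ofBijective v hbij).symm_apply_apply k
  let col : Sym2 V → Fin 3 :=
    Sym2.lift ⟨fun x y => ecol (2*p+1) i j (g x) (g y),
      fun x y => ecol_symm _ i j h2z _ _⟩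
  have colmk : ∀ x y : V, col s(x, y) = ecol (2*p+1) i j (g x) (g y) := fun x y => rfl
  have key2 : ∀ x y z : V, H.Adj x y → H.Adj x z → y ≠ z → col s(x,y) ≠ col s(x,z) := by
    intro x y z hxy hxz hyz
    obtain ⟨m, rfl⟩ := hbij.2 x
    obtain ⟨a, rfl⟩ := hbij.2 y
    obtain ⟨b, rfl⟩ := hbij.2 z
    rw [colmk, colmk, hgv, hgv, hgv]
    exact key m a b hxy hxz fun h => hyz (by rw [h])
  have C : H.lineGraph.Coloring (Fin 3) := by
    refine SimpleGraph.Coloring.mk (fun e => col e.1) ?_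
    intro e1 e2 hadj
    rw [SimpleGraph.lineGraph_adj_iff_exists] at hadj
    obtain ⟨hne', x, hx1, hx2⟩ := hadj
    have hs1 := Sym2.other_spec hx1
    have hs2 := Sym2.other_spec hx2
    have ha1 : H.Adj x (Sym2.Mem.other hx1) := by
      rw [← SimpleGraph.mem_edgeSet, hs1]; exact e1.2
    have ha2 : H.Adj x (Sym2.Mem.other hx2) := by
      rw [← SimpleGraph.mem_edgeSet, hs2]; exact e2.2
    have hyz : Sym2.Mem.other hx1 ≠ Sym2.Mem.other hx2 := by
      intro h
      apply hne'
      apply Subtype.ext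
      rw [← hs1, ← hs2, h]
    show col (e1 : Sym2 V) ≠ col (e2 : Sym2 V)
    rw [← hs1, ← hs2]
    exact key2 x _ _ ha1 ha2 hyz
  have hub : H.lineGraph.chromaticNumber ≤ 3 := by
    have := (SimpleGraph.Colorable.chromaticNumber_le (n := 3) ⟨C⟩)
    exact_mod_cast this
  -- lower bound: a triangle of edges at v i
  have hnot2 : ¬ H.lineGraph.Colorable 2 := by
    rintro ⟨C2⟩
    have hadj1 : H.Adj (v (i-1)) (v i) := (hcycm i).symm
    set E1 : H.edgeSet := ⟨s(v (i-1), v i), hadj1⟩ with hE1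
    set E2 : H.edgeSet := ⟨s(v i, v (i+1)), hcyc i⟩ with hE2
    set E3 : H.edgeSet := ⟨s(v i, v j), hchord⟩ with hE3
    have vne : ∀ x y : ZMod (2*p+1), x ≠ y → v x ≠ v y := fun x y h hh => h (hinj hh)
    have n1 : v (i-1) ≠ v i := vne _ _ fun h => one_ne_zero (α := ZMod (2*p+1)) (by linear_combination -h)
    have n2 : v (i-1) ≠ v (i+1) := vne _ _ fun h => h2z (by linear_combination -h)
    have n3 : v (i-1) ≠ v j := vne _ _ fun h => hne2 (by linear_combination h)
    have n4 : v i ≠ v (i+1) := vne _ _ fun h => one_ne_zero (α := ZMod (2*p+1)) (by linear_combination -h)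
    have n5 : v i ≠ v j := vne _ _ hne
    have n6 : v (i+1) ≠ v j := vne _ _ fun h => hne1 h.symm
    have d12 : E1 ≠ E2 := by
      simp only [hE1, hE2, Ne, Subtype.mk.injEq, Sym2.eq_iff]
      push_neg
      exact fun h => (Sym2.eq_iff.1 (congrArg Subtype.val h)).elim (fun h => n1 h.1) (fun h => n2 h.1)
    have d13 : E1 ≠ E3 := by
      simp only [hE1, hE3, Ne, Subtype.mk.injEq, Sym2.eq_iff]
      push_neg
      exact fun h => (Sym2.eq_iff.1 (congrArg Subtype.val h)).elim (fun h => n1 h.1) (fun h => n3 h.1)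
    have d23 : E2 ≠ E3 := by
      simp only [hE2, hE3, Ne, Subtype.mk.injEq, Sym2.eq_iff]
      push_neg
      exact fun h => (Sym2.eq_iff.1 (congrArg Subtype.val h)).elim (fun h => n6 h.2) (fun h => n5 h.1)
    have a12 : H.lineGraph.Adj E1 E2 :=
      SimpleGraph.lineGraph_adj_iff_exists.2 ⟨d12, v i, Sym2.mem_mk_right _ _, Sym2.mem_mk_left _ _⟩
    have a13 : H.lineGraph.Adj E1 E3 :=
      SimpleGraph.lineGraph_adj_iff_exists.2 ⟨d13, v i, Sym2.mem_mk_right _ _, Sym2.mem_mk_left _ _⟩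
    have a23 : H.lineGraph.Adj E2 E3 :=
      SimpleGraph.lineGraph_adj_iff_exists.2 ⟨d23, v i, Sym2.mem_mk_left _ _, Sym2.mem_mk_left _ _⟩
    have q12 := C2.valid a12
    have q13 := C2.valid a13
    have q23 := C2.valid a23
    revert q12 q13 q23
    generalize C2 E1 = x1
    generalize C2 E2 = x2
    generalize C2 E3 = x3
    revert x1 x2 x3
    decide
  have hlb : (3 : ℕ∞) ≤ H.lineGraph.chromaticNumber := by
    have hgt : ((2:ℕ) : ℕ∞) < H.lineGraph.chromaticNumber := by
      by_contra hle
      push_neg at hle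
      exact hnot2 (SimpleGraph.chromaticNumber_le_iff_colorable.1 hle)
    have := (ENat.add_one_le_iff (n := H.lineGraph.chromaticNumber)
      (m := ((2:ℕ) : ℕ∞)) (by simp)).2 hgt
    rwa [show ((2:ℕ) : ℕ∞) + 1 = 3 by norm_num] at this
  exact le_antisymm hub hlb
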